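/- Over the alphabet A = {a, b}, the language WMIX(ab, ba, a, b) = { w ∈ {a,b}* : |w|_{ab} = |w|_{ba} = |w|_a = |w|_b } is finite. -/
import Mathlib


/-- `occ w u` is the number of occurrences of `u` as a contiguous factor of `w`. -/
noncomputable def occ {A : Type*} (w u : List A) : ℕ :=
  Nat.card {p : List A × List A // p.1 ++ u ++ p.2 = w}

/-- letter `a` of the two-letter alphabet, modelled by `Bool`. -/
def la : Bool := true
/-- letter `b` of the two-letter alphabet, modelled by `Bool`. -/
def lb : Bool := false

lemma occ_finite {A : Type*} (w u : List A) :
    Finite {p : List A × List A // p.1 ++ u ++ p.2 = w} := by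
  apply Finite.of_injective (fun p => (⟨p.1.1.length, by
    have := congrArg List.length p.2
    simp at this
    omega⟩ : Fin (w.length + 1)))
  rintro ⟨⟨p1, p2⟩, hp⟩ ⟨⟨q1, q2⟩, hq⟩ h
  simp only [Fin.mk.injEq] at h
  simp only at hp hq
  have h1 : p1 = q1 := by
    have hp' : p1 = w.take p1.length := by
      rw [← hp]; simp [List.take_left]
    have hq' : q1 = w.take q1.length := by
      rw [← hq]; simp [List.take_left]
    rw [hp', hq', h]
  subst h1
  have h2 : p2 = q2 := by
    have := hp.trans hq.symm
    simpa using this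
  subst h2
  rfl

lemma occ_nil {A : Type*} (u : List A) (hu : u ≠ []) : occ [] u = 0 := by
  have : IsEmpty {p : List A × List A // p.1 ++ u ++ p.2 = ([] : List A)} := by
    constructor
    rintro ⟨⟨p1, p2⟩, hp⟩
    simp at hp
    exact hu hp.2.1
  rw [occ]
  exact Nat.card_of_isEmpty

noncomputable def consEquiv {A : Type*} (x : A) (w u : List A) :
    {p : List A × List A // p.1 ++ u ++ p.2 = x :: w} ≃
      ({p : List A × List A // p.1 ++ u ++ p.2 = w} ⊕ {s : List A // u ++ s = x :: w}) where
  toFun := fun p =>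
    match p with
    | ⟨([], p2), h⟩ => Sum.inr ⟨p2, by simpa using h⟩
    | ⟨(y :: t, p2), h⟩ => Sum.inl ⟨(t, p2), by
        have := (List.cons_eq_cons.mp (by simpa using h)).2
        simpa using this⟩
  invFun := fun s =>
    match s with
    | Sum.inl ⟨(t, p2), h⟩ => ⟨(x :: t, p2), by simp [h]⟩
    | Sum.inr ⟨s, h⟩ => ⟨([], s), by simpa using h⟩
  left_inv := by
    rintro ⟨⟨(_ | ⟨y, t⟩), p2⟩, h⟩
    · rfl
    · have hxy : y = x := by
        simp only [List.cons_append] at h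
        exact (List.cons_eq_cons.mp h).1
      subst hxy
      rfl
  right_inv := by
    rintro (⟨⟨t, p2⟩, h⟩ | ⟨s, h⟩) <;> rfl

lemma occ_cons {A : Type*} [DecidableEq A] (x : A) (w u : List A) (hu : u ≠ []) :
    occ (x :: w) u = occ w u + (if u <+: (x :: w) then 1 else 0) := by
  have f1 := occ_finite w u
  have f2 : Finite {s : List A // u ++ s = x :: w} := by
    have : Subsingleton {s : List A // u ++ s = x :: w} := by
      constructor
      rintro ⟨s1, h1⟩ ⟨s2, h2⟩
      simp only [Subtype.mk.injEq]
      exact List.append_cancel_left (h1.trans h2.symm)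
    exact Finite.of_subsingleton
  rw [occ, Nat.card_congr (consEquiv x w u), Nat.card_sum]
  congr 1
  by_cases h : u <+: (x :: w)
  · simp only [h, if_true]
    obtain ⟨s, hs⟩ := h
    have : Unique {s : List A // u ++ s = x :: w} := by
      refine ⟨⟨⟨s, hs⟩⟩, ?_⟩
      rintro ⟨t, ht⟩
      simp only [Subtype.mk.injEq]
      exact List.append_cancel_left (ht.trans hs.symm)
    exact Nat.card_unique
  · simp only [h, if_false]
    have : IsEmpty {s : List A // u ++ s = x :: w} := by
      constructor; rintro ⟨s, hs⟩; exact h ⟨s, hs⟩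
    exact Nat.card_of_isEmpty

lemma occ_single {A : Type*} [DecidableEq A] (x : A) (w : List A) :
    occ w [x] = w.count x := by
  induction w with
  | nil => simp [occ_nil]
  | cons y t ih =>
    rw [occ_cons y t [x] (by simp), ih, List.count_cons]
    have : [x] <+: (y :: t) ↔ y = x := by
      constructor
      · rintro ⟨s, hs⟩
        simpa using (List.cons_eq_cons.mp hs).1.symm
      · rintro rfl; exact ⟨t, rfl⟩
    by_cases h : y = x <;> simp [this, h]

lemma count_tf (w : List Bool) : w.count true + w.count false = w.length := by
  induction w with
  | nil => simp
  | cons x t ih => cases x <;> simp [List.count_cons] <;> omega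

lemma pair_bound : ∀ w : List Bool, w ≠ [] →
    occ w [la, lb] + occ w [lb, la] + 1 ≤ w.length := by
  intro w
  induction w with
  | nil => intro h; exact absurd rfl h
  | cons x t ih =>
    intro _
    rw [occ_cons x t [la, lb] (by simp), occ_cons x t [lb, la] (by simp)]
    rcases eq_or_ne t [] with rfl | ht
    · have h1 : ¬ ([la, lb] <+: [x]) := by
        intro h; have := h.length_le; simp at this
      have h2 : ¬ ([lb, la] <+: [x]) := by
        intro h; have := h.length_le; simp at this
      simp [h1, h2, occ_nil]
    · have key : (if [la, lb] <+: (x :: t) then 1 else 0) +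
          (if [lb, la] <+: (x :: t) then 1 else 0) ≤ 1 := by
        by_cases h1 : [la, lb] <+: (x :: t) <;> by_cases h2 : [lb, la] <+: (x :: t) <;>
          simp [h1, h2]
        obtain ⟨s1, hs1⟩ := h1
        obtain ⟨s2, hs2⟩ := h2
        have e1 := (List.cons_eq_cons.mp hs1).1
        have e2 := (List.cons_eq_cons.mp hs2).1
        rw [← e1] at e2
        exact absurd e2 (by simp [la, lb])
      have := ih ht
      simp only [List.length_cons]
      omega

theorem wmix_ab_ba_a_b_finite :
    {w : List Bool | occ w [la, lb] = occ w [lb, la] ∧ occ w [lb, la] = occ w [la] ∧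
      occ w [la] = occ w [lb]}.Finite := by
  apply Set.Finite.subset (Set.finite_singleton ([] : List Bool))
  rintro w ⟨h1, h2, h3⟩
  simp only [Set.mem_singleton_iff]
  by_contra hw
  have hb := pair_bound w hw
  have hlen : occ w [la] + occ w [lb] = w.length := by
    rw [occ_single, occ_single, la, lb]
    exact count_tf w
  omega
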